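/- Let φ : [0,∞) → [0,∞) be an unbounded, approximately nondecreasing metric transform. Then the transformed Euclidean half line ([0,∞), |·|_φ) admits a rough isometric embedding into some Gromov hyperbolic metric space if and only if either (i) φ is an approximate dilation, or (ii) φ is logarithm-like. -/

import Mathlib

/-- `d` is a metric on `X`: it vanishes exactly on the diagonal, is symmetric,
and satisfies the triangle inequality. -/
def IsMetricOn {X : Type*} (d : X → X → ℝ) : Prop :=
  (∀ x y : X, d x y = 0 ↔ x = y) ∧ (∀ x y : X, d x y = d y x) ∧
    (∀ x y z : X, d x z ≤ d x y + d y z)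

/-- `φ : [0,∞) → [0,∞)` is a metric transform: for every metric space `(X,d)`,
`φ ∘ d` is again a metric on `X`. -/
def IsMetricTransform (φ : ℝ → ℝ) : Prop :=
  ∀ (X : Type) (d : X → X → ℝ), IsMetricOn d → IsMetricOn (fun x y => φ (d x y))

/-- The Gromov product `(x|y)_w` for a distance function `d`. -/
noncomputable def gromovProd {X : Type*} (d : X → X → ℝ) (w x y : X) : ℝ :=
  (d x w + d y w - d x y) / 2

/-- `d` is `δ`-hyperbolic: `(x|y)_w ≥ min{(x|z)_w, (y|z)_w} − δ` for all `x,y,z,w`. -/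
def IsDeltaHyp {X : Type*} (d : X → X → ℝ) (δ : ℝ) : Prop :=
  ∀ w x y z : X, min (gromovProd d w x z) (gromovProd d w y z) - δ ≤ gromovProd d w x y

/-- `d` is Gromov hyperbolic: it is `δ`-hyperbolic for some `δ ≥ 0`. -/
def IsGromovHyp {X : Type*} (d : X → X → ℝ) : Prop :=
  ∃ δ : ℝ, 0 ≤ δ ∧ IsDeltaHyp d δ

/-- `φ` is approximately nondecreasing on `[0,∞)`:
`η`-nondecreasing for some `η ≥ 0`. -/
def ApproxNondecreasing (φ : ℝ → ℝ) : Prop :=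
  ∃ η : ℝ, 0 ≤ η ∧ ∀ t s : ℝ, 0 ≤ t → t ≤ s → φ t ≤ φ s + η

/-- `φ` is unbounded on `[0,∞)`. -/
def UnboundedOnNonneg (φ : ℝ → ℝ) : Prop :=
  ∀ M : ℝ, ∃ t : ℝ, 0 ≤ t ∧ M < φ t

/-- `φ` is a `(λ,k)`-approximate dilation for some `λ > 0`, `k ≥ 0`. -/
def ApproxDilation (φ : ℝ → ℝ) : Prop :=
  ∃ lam k : ℝ, 0 < lam ∧ 0 ≤ k ∧ ∀ t : ℝ, 0 ≤ t → |φ t - lam * t| ≤ k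

/-- `φ` is logarithm-like: `t ↦ φ(2t) − φ(t)` is bounded from above on `[0,∞)`. -/
def LogarithmLike (φ : ℝ → ℝ) : Prop :=
  ∃ C : ℝ, ∀ t : ℝ, 0 ≤ t → φ (2 * t) - φ t ≤ C

/-- The distance `|x − y|_φ = φ(|x − y|)` on the half line `[0,∞)`. -/
noncomputable def halfLineDist (φ : ℝ → ℝ) (x y : {t : ℝ // 0 ≤ t}) : ℝ :=
  φ |x.1 - y.1|

/-- `(X,d)` contains a `k`-rough geodesic ray for some `k ≥ 0`. -/
def HasRoughGeodesicRay (X : Type*) (d : X → X → ℝ) : Prop :=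
  ∃ k : ℝ, 0 ≤ k ∧ ∃ γ : ℝ → X, ∀ t s : ℝ, 0 ≤ t → 0 ≤ s →
    |t - s| - k ≤ d (γ t) (γ s) ∧ d (γ t) (γ s) ≤ |t - s| + k

/-- `d` is approximately ultrametric: `δ`-ultrametric for some `δ ≥ 0`. -/
def ApproxUltrametric {X : Type*} (d : X → X → ℝ) : Prop :=
  ∃ δ : ℝ, 0 ≤ δ ∧ ∀ x y z : X, d x y ≤ max (d x z) (d z y) + δ

/-- `d` is `k`-roughly geodesic: every pair of points is joined by a `k`-rough
geodesic segment. -/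
def RoughlyGeodesicK {X : Type*} (d : X → X → ℝ) (k : ℝ) : Prop :=
  ∀ x y : X, ∃ b : ℝ, 0 ≤ b ∧ ∃ γ : ℝ → X, γ 0 = x ∧ γ b = y ∧
    ∀ t s : ℝ, t ∈ Set.Icc 0 b → s ∈ Set.Icc 0 b →
      |t - s| - k ≤ d (γ t) (γ s) ∧ d (γ t) (γ s) ≤ |t - s| + k

/-- `d` has the `k`-rough midpoint property. -/
def RoughMidpointK {X : Type*} (d : X → X → ℝ) (k : ℝ) : Prop :=
  ∀ x y : X, ∃ z : X, max (d x z) (d y z) ≤ d x y / 2 + k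

/-- `(a,b,c)` is a triangle triplet. -/
def IsTriangleTriplet (a b c : ℝ) : Prop := a ≤ b + c ∧ b ≤ a + c ∧ c ≤ a + b


section StmtFourAux

lemma ultra4 (a b c e f g δ : ℝ)
    (h1 : a ≤ max b e + δ) (h2 : a ≤ max c f + δ)
    (h3 : g ≤ max e f + δ) (h4 : g ≤ max b c + δ) (hag : g ≤ a) :
    a + g ≤ max (b + f) (c + e) + 2*δ := by
  rcases le_total b e with hbe | hbe
  all_goals rcases le_total c f with hcf | hcf
  all_goals rcases le_total e f with hef | hef
  all_goals rcases le_total b c with hbc | hbc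
  all_goals simp only [max_eq_left, max_eq_right, hbe, hcf, hef, hbc] at h1 h2 h3 h4
  all_goals first
    | (exact le_trans (by linarith) (add_le_add_left (le_max_left (b+f) (c+e)) _))
    | (exact le_trans (by linarith) (add_le_add_left (le_max_right (b+f) (c+e)) _))

lemma ultra4' (a b c e f g δ : ℝ)
    (h1 : a ≤ max b e + δ) (h2 : a ≤ max c f + δ)
    (h3 : g ≤ max e f + δ) (h4 : g ≤ max b c + δ) :
    a + g ≤ max (b + f) (c + e) + 2*δ := by
  rcases le_total g a with h | h
  · exact ultra4 a b c e f g δ h1 h2 h3 h4 h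
  · have := ultra4 g b e c f a δ h4 h3 h2 h1 h
    rw [add_comm e c] at this
    linarith [this]

lemma hyp_of_fourpt {X : Type*} (d : X → X → ℝ) (δ : ℝ)
    (h4 : ∀ x y z w : X, d x y + d z w ≤ max (d x z + d y w) (d x w + d y z) + 2*δ) :
    IsDeltaHyp d δ := by
  intro w x y z
  rcases min_cases (gromovProd d w x z) (gromovProd d w y z) with ⟨hm, hc⟩ | ⟨hm, hc⟩ <;>
    rw [hm] <;> simp only [gromovProd] at hc ⊢
  · have h := h4 x y z w
    rw [max_eq_left (by linarith : d x w + d y z ≤ d x z + d y w)] at h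
    linarith
  · have h := h4 x y z w
    rw [max_eq_right (by linarith : d x z + d y w ≤ d x w + d y z)] at h
    linarith

lemma fourpt_of_hyp {X : Type*} (d : X → X → ℝ) (δ : ℝ) (h : IsDeltaHyp d δ) :
    ∀ x y z w : X, d x y + d z w ≤ max (d x z + d y w) (d x w + d y z) + 2*δ := by
  intro x y z w
  have hh := h w x y z
  rcases min_cases (gromovProd d w x z) (gromovProd d w y z) with ⟨hm, hc⟩ | ⟨hm, hc⟩ <;>
    rw [hm] at hh <;> simp only [gromovProd] at hh
  · have : d x y + d z w ≤ d x z + d y w + 2*δ := by linarith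
    exact le_trans this (by linarith [le_max_left (d x z + d y w) (d x w + d y z)])
  · have : d x y + d z w ≤ d x w + d y z + 2*δ := by linarith
    exact le_trans this (by linarith [le_max_right (d x z + d y w) (d x w + d y z)])

lemma line4 (x y z w : ℝ) :
    |x - y| + |z - w| ≤ max (|x - z| + |y - w|) (|x - w| + |y - z|) := by
  rcases abs_cases (x - y) with ⟨h1, h1'⟩ | ⟨h1, h1'⟩ <;>
  rcases abs_cases (z - w) with ⟨h2, h2'⟩ | ⟨h2, h2'⟩ <;>
  rcases abs_cases (x - z) with ⟨h3, h3'⟩ | ⟨h3, h3'⟩ <;>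
  rcases abs_cases (y - w) with ⟨h4, h4'⟩ | ⟨h4, h4'⟩ <;>
  rcases abs_cases (x - w) with ⟨h5, h5'⟩ | ⟨h5, h5'⟩ <;>
  rcases abs_cases (y - z) with ⟨h6, h6'⟩ | ⟨h6, h6'⟩ <;>
  rcases le_total (|x - z| + |y - w|) (|x - w| + |y - z|) with h | h <;>
  first
    | (rw [max_eq_right h]; linarith)
    | (rw [max_eq_left h]; linarith)

lemma punit_metric : IsMetricOn (fun (_ _ : PUnit) => (0:ℝ)) := by
  refine ⟨fun x y => ?_, fun x y => rfl, fun x y z => by norm_num⟩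
  simp [Subsingleton.elim x y]

lemma phi_zero (φ : ℝ → ℝ) (hmt : IsMetricTransform φ) : φ 0 = 0 := by
  have h := (hmt PUnit _ punit_metric).1 PUnit.unit PUnit.unit
  simpa using h.mpr rfl

lemma real_metric : IsMetricOn (fun x y : ℝ => |x - y|) :=
  ⟨fun x y => by simp [abs_eq_zero, sub_eq_zero],
   fun x y => abs_sub_comm x y, fun x y z => abs_sub_le x y z⟩

lemma hl_metric : IsMetricOn (fun x y : {t : ℝ // 0 ≤ t} => |x.1 - y.1|) :=
  ⟨fun x y => by
      simp only [abs_eq_zero, sub_eq_zero]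
      exact ⟨fun h => Subtype.ext h, fun h => by rw [h]⟩,
   fun x y => abs_sub_comm _ _, fun x y z => abs_sub_le _ _ _⟩

lemma phi_subadd (φ : ℝ → ℝ) (hmt : IsMetricTransform φ) :
    ∀ a b : ℝ, 0 ≤ a → 0 ≤ b → φ (a + b) ≤ φ a + φ b := by
  intro a b ha hb
  have h := (hmt ℝ _ real_metric).2.2 0 a (a + b)
  simp only at h
  rw [show |(0:ℝ) - a| = a by rw [zero_sub, abs_neg, abs_of_nonneg ha],
      show |(0:ℝ) - (a+b)| = a + b by rw [zero_sub, abs_neg, abs_of_nonneg (by linarith)],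
      show |a - (a+b)| = b by rw [show a - (a+b) = -b by ring, abs_neg, abs_of_nonneg hb]] at h
  exact h

lemma main_rev (φ : ℝ → ℝ) (η Δ : ℝ) (hη : 0 ≤ η) (hΔ : 0 ≤ Δ)
    (hpos : ∀ t : ℝ, 0 ≤ t → 0 ≤ φ t) (h0 : φ 0 = 0)
    (hsub : ∀ a b : ℝ, 0 ≤ a → 0 ≤ b → φ (a + b) ≤ φ a + φ b)
    (hmono : ∀ t s : ℝ, 0 ≤ t → t ≤ s → φ t ≤ φ s + η)
    (hub : UnboundedOnNonneg φ)
    (hFP : ∀ x a y : ℝ, 0 ≤ x → 0 ≤ a → 0 ≤ y →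
      φ (x + a) + φ (a + y) ≤ max (φ x + φ y) (φ (x + a + y) + φ a) + Δ)
    (hnl : ¬ LogarithmLike φ) : ApproxDilation φ := by
  simp only [LogarithmLike] at hnl
  push_neg at hnl
  obtain ⟨T, hT0, hT⟩ := hnl (2*Δ + 3*η)
  obtain ⟨G, hGdef⟩ : ∃ G : ℝ, G = φ (2*T) - φ T - Δ := ⟨_, rfl⟩
  have hG : Δ + 3*η < G := by rw [hGdef]; linarith
  -- step lemma
  have hstep : ∀ u : ℝ, T ≤ u → φ u + G ≤ φ (u + T) := by
    intro u hu
    have hx' : (0:ℝ) ≤ u - T := by linarith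
    have h := hFP T T (u - T) hT0 hT0 hx'
    rw [show T + T + (u - T) = u + T by ring, show T + (u - T) = u by ring,
        show T + T = 2 * T by ring] at h
    rcases max_cases (φ T + φ (u - T)) (φ (u + T) + φ T) with ⟨hm, _⟩ | ⟨hm, _⟩ <;>
      rw [hm] at h
    · exfalso
      have := hmono (u - T) u hx' (by linarith)
      linarith
    · linarith
  have hL8 : ∀ x a y : ℝ, T ≤ x → T ≤ a → T ≤ y →
      φ (x + a) + φ (a + y) ≤ φ (x + a + y) + φ a + Δ := by
    intro x a y hx ha hy
    have h := hFP x a y (le_trans hT0 hx) (le_trans hT0 ha) (le_trans hT0 hy)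
    rcases max_cases (φ x + φ y) (φ (x + a + y) + φ a) with ⟨hm, _⟩ | ⟨hm, _⟩ <;>
      rw [hm] at h
    · exfalso
      have h1 := hstep x hx
      have h2 := hstep y hy
      have h3 := hmono (x + T) (x + a) (by linarith) (by linarith)
      have h4 : φ (y + T) ≤ φ (a + y) + η := by
        have := hmono (y + T) (a + y) (by linarith) (by linarith)
        linarith
      linarith
    · exact h
  obtain ⟨K, hKdef⟩ : ∃ K : ℝ, K = φ (2*T) + φ T + 2*η + Δ := ⟨_, rfl⟩
  have hK0 : 0 ≤ K := by
    have := hpos T hT0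
    have := hpos (2*T) (by linarith)
    simp only [hKdef]; linarith
  have hsuper' : ∀ a b : ℝ, 0 ≤ a → 0 ≤ b → a ≤ b → φ a + φ b ≤ φ (a + b) + K := by
    intro a b ha hb hab
    rcases le_total a (2*T) with h2T | h2T
    · have e1 := hmono a (2*T) ha h2T
      have e2 := hmono b (a + b) hb (by linarith)
      have := hpos T hT0
      simp only [hKdef]; linarith
    · have hTa : T ≤ a - T := by linarith
      have hTb : T ≤ b := by linarith
      have h := hL8 (a - T) T b hTa le_rfl hTb
      rw [show a - T + T = a by ring] at h
      have e1 : φ b ≤ φ (T + b) + η := hmono b (T + b) hb (by linarith)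
      have := hpos (2*T) (by linarith)
      simp only [hKdef]; linarith
  have hsuper : ∀ a b : ℝ, 0 ≤ a → 0 ≤ b → φ a + φ b ≤ φ (a + b) + K := by
    intro a b ha hb
    rcases le_total a b with h | h
    · exact hsuper' a b ha hb h
    · have := hsuper' b a hb ha h
      rw [add_comm b a] at this
      linarith
  -- iterated lower bound
  have hmul : ∀ m : ℕ, ∀ t : ℝ, 0 ≤ t → (m : ℝ) * (φ t - K) ≤ φ (m * t) := by
    intro m
    induction m with
    | zero => intro t ht; simp [h0]
    | succ m ih =>
      intro t ht
      have h1 := ih t ht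
      have h2 := hsuper (m * t) t (by positivity) ht
      push_cast
      have : ((m : ℝ) + 1) * t = m * t + t := by ring
      rw [this]
      nlinarith [h2, h1]
  -- block upper bound
  have hblocks : ∀ n : ℕ, ∀ s u : ℝ, 0 < u → 0 ≤ s → s ≤ n * u → φ s ≤ n * φ u + η := by
    intro n
    induction n with
    | zero =>
      intro s u hu hs hsu
      have : s = 0 := le_antisymm (by simpa using hsu) hs
      simp [this, h0, hη]
    | succ n ih =>
      intro s u hu hs hsu
      have hφu : 0 ≤ φ u := hpos u hu.le
      rcases le_total s u with h | h
      · have := hmono s u hs h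
        push_cast
        nlinarith [Nat.cast_nonneg (α := ℝ) n]
      · have hsu' : s - u ≤ n * u := by push_cast at hsu ⊢; linarith
        have h1 := ih (s - u) u hu (by linarith) hsu'
        have h2 := hsub (s - u) u (by linarith) hu.le
        rw [show s - u + u = s by ring] at h2
        push_cast
        linarith
  -- upper bound vs every slope
  have hupper : ∀ t : ℝ, 0 ≤ t → ∀ u : ℝ, 0 < u → φ t ≤ K + t * (φ u / u) := by
    intro t ht u hu
    by_contra hcon
    push_neg at hcon
    have hD : 0 < φ t - K - t * (φ u / u) := by linarith
    obtain ⟨m, hm⟩ := exists_nat_gt ((φ u + η) / (φ t - K - t * (φ u / u)))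
    have hBig : φ u + η < (m : ℝ) * (φ t - K - t * (φ u / u)) := by
      rw [div_lt_iff₀ hD] at hm; linarith
    have hmt0 : (0:ℝ) ≤ ↑m * t := by positivity
    have hn1 : (↑m * t) / u ≤ (⌈(↑m * t) / u⌉₊ : ℝ) := Nat.le_ceil _
    have hn2 : ((⌈(↑m * t) / u⌉₊ : ℝ)) ≤ (↑m * t) / u + 1 :=
      le_of_lt (Nat.ceil_lt_add_one (by positivity))
    have hA := hmul m t ht
    have hB := hblocks ⌈(↑m * t) / u⌉₊ (↑m * t) u hu hmt0 ((div_le_iff₀ hu).mp hn1)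
    have hφu : 0 ≤ φ u := hpos u hu.le
    have hC : ((⌈(↑m * t) / u⌉₊ : ℝ)) * φ u ≤ ((↑m * t) / u + 1) * φ u :=
      mul_le_mul_of_nonneg_right hn2 hφu
    have hC' : ((↑m * t) / u + 1) * φ u = (↑m * t) / u * φ u + φ u := by ring
    have hexp : (m : ℝ) * (φ t - K - t * (φ u / u)) =
        (m : ℝ) * (φ t - K) - ((↑m * t) / u) * φ u := by
      field_simp
    have hsmall : (m : ℝ) * (φ t - K - t * (φ u / u)) ≤ φ u + η := by
      rw [hexp]; linarith
    linarith
  -- define lambda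
  have hbdd : BddBelow ((fun u => φ u / u) '' Set.Ioi (0:ℝ)) := by
    refine ⟨0, ?_⟩
    rintro v ⟨u, hu, rfl⟩
    exact div_nonneg (hpos u (le_of_lt hu)) (le_of_lt hu)
  have hne : ((fun u => φ u / u) '' Set.Ioi (0:ℝ)).Nonempty :=
    ⟨φ 1 / 1, ⟨1, by norm_num⟩⟩
  obtain ⟨lam, hlamdef⟩ :
      ∃ l : ℝ, l = sInf ((fun u => φ u / u) '' Set.Ioi (0:ℝ)) := ⟨_, rfl⟩
  have hlow : ∀ t : ℝ, 0 ≤ t → lam * t ≤ φ t := by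
    intro t ht
    rcases eq_or_lt_of_le ht with h | h
    · rw [← h]; simp [h0]
    · have h1 : lam ≤ φ t / t := by
        rw [hlamdef]; exact csInf_le hbdd ⟨t, h, rfl⟩
      calc lam * t ≤ (φ t / t) * t := mul_le_mul_of_nonneg_right h1 ht
        _ = φ t := by field_simp
  have hup : ∀ t : ℝ, 0 ≤ t → φ t ≤ lam * t + K := by
    intro t ht
    rcases eq_or_lt_of_le ht with h | h
    · rw [← h]; simp [h0]; linarith [hK0]
    · have h1 : (φ t - K) / t ≤ lam := by
        rw [hlamdef]
        apply le_csInf hne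
        rintro v ⟨u, hu, rfl⟩
        rw [div_le_iff₀ h]
        have := hupper t ht u hu
        have hcomm : (φ u / u) * t = t * (φ u / u) := by ring
        linarith [hcomm]
      rw [div_le_iff₀ h] at h1
      linarith
  have hlampos : 0 < lam := by
    by_contra hc
    push_neg at hc
    obtain ⟨t, ht, htK⟩ := hub K
    have h1 := hup t ht
    nlinarith
  exact ⟨lam, K, hlampos, hK0,
    fun t ht => abs_le.mpr ⟨by linarith [hlow t ht], by linarith [hup t ht]⟩⟩


end StmtFourAux

/-- The transformed half line roughly isometrically embeds in a Gromov
hyperbolic space iff `φ` is an approximate dilation or logarithm-like. -/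
theorem stmt_4 (φ : ℝ → ℝ)
    (hnonneg : ∀ t : ℝ, 0 ≤ t → 0 ≤ φ t)
    (hmt : IsMetricTransform φ)
    (hand : ApproxNondecreasing φ)
    (hub : UnboundedOnNonneg φ) :
    (∃ (Y : Type) (dY : Y → Y → ℝ), IsMetricOn dY ∧ IsGromovHyp dY ∧
        ∃ (f : {t : ℝ // 0 ≤ t} → Y) (k : ℝ), 0 ≤ k ∧
          ∀ x y : {t : ℝ // 0 ≤ t},
            halfLineDist φ x y - k ≤ dY (f x) (f y) ∧
            dY (f x) (f y) ≤ halfLineDist φ x y + k) ↔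
      (ApproxDilation φ ∨ LogarithmLike φ) := by
  obtain ⟨η, hη, hmono⟩ := hand
  constructor
  · rintro ⟨Y, dY, hmY, ⟨δ, hδ0, hhyp⟩, f, k, hk0, hemb⟩
    by_cases hlog : LogarithmLike φ
    · exact Or.inr hlog
    left
    have hφ4 : ∀ u v s t : {t : ℝ // 0 ≤ t},
        halfLineDist φ u v + halfLineDist φ s t ≤
          max (halfLineDist φ u s + halfLineDist φ v t)
              (halfLineDist φ u t + halfLineDist φ v s) + (2*δ + 4*k) := by
      intro u v s t
      have h := fourpt_of_hyp dY δ hhyp (f u) (f v) (f s) (f t)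
      obtain ⟨e1l, e1r⟩ := hemb u v
      obtain ⟨e2l, e2r⟩ := hemb s t
      obtain ⟨e3l, e3r⟩ := hemb u s
      obtain ⟨e4l, e4r⟩ := hemb v t
      obtain ⟨e5l, e5r⟩ := hemb u t
      obtain ⟨e6l, e6r⟩ := hemb v s
      rcases max_cases (dY (f u) (f s) + dY (f v) (f t))
          (dY (f u) (f t) + dY (f v) (f s)) with ⟨hm, _⟩ | ⟨hm, _⟩ <;> rw [hm] at h
      · exact le_trans (show halfLineDist φ u v + halfLineDist φ s t ≤
          halfLineDist φ u s + halfLineDist φ v t + (2*δ + 4*k) by linarith)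
          (add_le_add_left (le_max_left _ _) _)
      · exact le_trans (show halfLineDist φ u v + halfLineDist φ s t ≤
          halfLineDist φ u t + halfLineDist φ v s + (2*δ + 4*k) by linarith)
          (add_le_add_left (le_max_right _ _) _)
    have hFP : ∀ x a y : ℝ, 0 ≤ x → 0 ≤ a → 0 ≤ y →
        φ (x + a) + φ (a + y) ≤ max (φ x + φ y) (φ (x + a + y) + φ a) + (2*δ + 4*k) := by
      intro x a y hx ha hy
      have h := hφ4 ⟨0, le_rfl⟩ ⟨x+a, by linarith⟩ ⟨x, hx⟩ ⟨x+a+y, by linarith⟩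
      simp only [halfLineDist] at h
      rw [show |(0:ℝ) - (x+a)| = x + a by
            rw [zero_sub, abs_neg, abs_of_nonneg (by linarith)],
          show |x - (x+a+y)| = a + y by
            rw [show x - (x+a+y) = -(a+y) by ring, abs_neg, abs_of_nonneg (by linarith)],
          show |(0:ℝ) - x| = x by rw [zero_sub, abs_neg, abs_of_nonneg hx],
          show |x+a - (x+a+y)| = y by
            rw [show x+a - (x+a+y) = -y by ring, abs_neg, abs_of_nonneg hy],
          show |(0:ℝ) - (x+a+y)| = x+a+y by
            rw [zero_sub, abs_neg, abs_of_nonneg (by linarith)],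
          show |x+a - x| = a by rw [show x+a-x = a by ring, abs_of_nonneg ha]] at h
      exact h
    exact main_rev φ η (2*δ + 4*k) hη (by linarith) hnonneg (phi_zero φ hmt)
      (phi_subadd φ hmt) hmono hub hFP hlog
  · rintro (⟨lam, k, hlam, hk, hdil⟩ | ⟨C, hC⟩)
    · -- approximate dilation: embed into the scaled real line
      refine ⟨ℝ, fun x y => lam * |x - y|, ?_, ?_, fun x => x.1, k, hk, ?_⟩
      · refine ⟨fun x y => ?_, fun x y => ?_, fun x y z => ?_⟩
        · show lam * |x - y| = 0 ↔ x = y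
          constructor
          · intro h
            have h2 := (mul_eq_zero.mp h).resolve_left (ne_of_gt hlam)
            rwa [abs_eq_zero, sub_eq_zero] at h2
          · rintro rfl; simp
        · show lam * |x - y| = lam * |y - x|
          rw [abs_sub_comm]
        · show lam * |x - z| ≤ lam * |x - y| + lam * |y - z|
          have h := abs_sub_le x y z
          have h2 := mul_le_mul_of_nonneg_left h hlam.le
          rw [mul_add] at h2
          linarith
      · refine ⟨0, le_rfl, hyp_of_fourpt _ 0 ?_⟩
        intro x y z w
        have h := line4 x y z w
        rcases le_total (|x - z| + |y - w|) (|x - w| + |y - z|) with hc | hc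
        · rw [max_eq_right hc] at h
          have h2 := mul_le_mul_of_nonneg_left h hlam.le
          rw [mul_add, mul_add] at h2
          exact le_trans (by linarith) (add_le_add_left (le_max_right _ _) _)
        · rw [max_eq_left hc] at h
          have h2 := mul_le_mul_of_nonneg_left h hlam.le
          rw [mul_add, mul_add] at h2
          exact le_trans (by linarith) (add_le_add_left (le_max_left _ _) _)
      · intro x y
        have h := abs_le.mp (hdil |x.1 - y.1| (abs_nonneg _))
        constructor
        · simp only [halfLineDist]; linarith [h.2]
        · simp only [halfLineDist]; linarith [h.1]
    · -- logarithm-like: the transformed half line itself is hyperbolic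
      refine ⟨{t : ℝ // 0 ≤ t}, halfLineDist φ, hmt _ _ hl_metric, ?_, id, 0, le_rfl,
        fun x y => by constructor <;> simp⟩
      have hsymm : ∀ x y : {t : ℝ // 0 ≤ t}, halfLineDist φ x y = halfLineDist φ y x :=
        fun x y => by simp only [halfLineDist]; rw [abs_sub_comm]
      have hu : ∀ x y z : {t : ℝ // 0 ≤ t},
          halfLineDist φ x y ≤ max (halfLineDist φ x z) (halfLineDist φ z y)
            + max 0 (C + η) := by
        intro x y z
        have hM0 : 0 ≤ max |x.1 - z.1| |z.1 - y.1| :=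
          le_trans (abs_nonneg _) (le_max_left _ _)
        have h1 : |x.1 - y.1| ≤ 2 * max |x.1 - z.1| |z.1 - y.1| := by
          have ht := abs_sub_le x.1 z.1 y.1
          have hl := le_max_left |x.1 - z.1| |z.1 - y.1|
          have hr := le_max_right |x.1 - z.1| |z.1 - y.1|
          linarith
        have h2 : φ |x.1 - y.1| ≤ φ (2 * max |x.1 - z.1| |z.1 - y.1|) + η :=
          hmono _ _ (abs_nonneg _) h1
        have h3 := hC (max |x.1 - z.1| |z.1 - y.1|) hM0
        have h4 : φ (max |x.1 - z.1| |z.1 - y.1|)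
            ≤ max (φ |x.1 - z.1|) (φ |z.1 - y.1|) := by
          rcases max_cases |x.1 - z.1| |z.1 - y.1| with ⟨hm, _⟩ | ⟨hm, _⟩ <;> rw [hm]
          · exact le_max_left _ _
          · exact le_max_right _ _
        have h5 : C + η ≤ max 0 (C + η) := le_max_right _ _
        simp only [halfLineDist]
        linarith
      refine ⟨max 0 (C + η), le_max_left _ _, hyp_of_fourpt _ _ ?_⟩
      intro x y z w
      have h1 := hu x y z
      rw [hsymm z y] at h1
      have h2 := hu x y w
      rw [hsymm w y] at h2
      have h3 := hu z w y
      rw [hsymm z y] at h3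
      have h4 := hu z w x
      rw [hsymm z x] at h4
      exact ultra4' _ _ _ _ _ _ _ h1 h2 h3 h4
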